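/- Let V be a finite set and let X, Y, X′, Y′ be subsets of V that cover V and are pairwise disjoint except for X ∩ X′ = {s}. Let A be the symmetric integer matrix indexed by V which agrees with the F-matrix F[X,Y] on entries with both indices in X ∪ Y, agrees with the F-matrix F[X′,Y′] on entries with both indices in X′ ∪ Y′, and is 0 on all entries with one index in (X ∪ Y) ∖ {s} and the other in (X′ ∪ Y′) ∖ {s}. Then for every r ∈ X ∖ {s}, the matrix T_{s,r}A is the matrix built in exactly the same way from the four sets X ∖ {r}, Y, X′, Y′ ∪ {r}. -/

import Mathlib

open Matrix

/-- `M_{s,r}^σ = I + σ·e_s·e_rᵀ`. -/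
def Msr {V : Type*} [Fintype V] [DecidableEq V] (σ : ℤ) (s r : V) : Matrix V V ℤ :=
  1 + Matrix.single s r σ

/-- `T_{s,r} A = (M_{s,r}^{-A_{s,r}})ᵀ · A · M_{s,r}^{-A_{s,r}}`. -/
def Tsr {V : Type*} [Fintype V] [DecidableEq V] (s r : V) (A : Matrix V V ℤ) : Matrix V V ℤ :=
  (Msr (-(A s r)) s r)ᵀ * A * Msr (-(A s r)) s r

/-- The matrix indexed by `V` that agrees with the F-matrix `F[X,Y]` on entries with both
indices in `X ∪ Y`, agrees with the F-matrix `F[X',Y']` on entries with both indices in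
`X' ∪ Y'`, and is `0` on all remaining (mixed) off-diagonal entries.  (Recall that the
F-matrix `F[X,Y]` has diagonal entries `2`, entry `+1` between two distinct vertices in the
same part, and entry `-1` between two vertices in different parts.) -/
def glueF {V : Type*} [DecidableEq V] (X Y X' Y' : Finset V) : Matrix V V ℤ :=
  fun i j =>
    if i = j then 2
    else if i ∈ X ∪ Y ∧ j ∈ X ∪ Y then (if (i ∈ X ↔ j ∈ X) then 1 else -1)
    else if i ∈ X' ∪ Y' ∧ j ∈ X' ∪ Y' then (if (i ∈ X' ↔ j ∈ X') then 1 else -1)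
    else 0

lemma stdT {V : Type*} [Fintype V] [DecidableEq V] (σ : ℤ) (s r : V) :
    (Matrix.single s r σ)ᵀ = Matrix.single r s σ := by
  ext a b
  simp [Matrix.single, and_comm]

lemma Tsr_apply {V : Type*} [Fintype V] [DecidableEq V] (s r : V) (A : Matrix V V ℤ)
    (i j : V) :
    Tsr s r A i j = A i j
      + (-(A s r)) * ((if i = r then A s j else 0) + (if j = r then A i s else 0))
      + (if i = r then 1 else 0) * (if j = r then 1 else 0) * (A s r * A s r * A s s) := by
  have h : Tsr s r A = A + A * Matrix.single s r (-(A s r))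
      + (Matrix.single r s (-(A s r))) * (A + A * Matrix.single s r (-(A s r))) := by
    simp only [Tsr, Msr, Matrix.transpose_add, Matrix.transpose_one, stdT,
      Matrix.add_mul, Matrix.mul_add, Matrix.one_mul, Matrix.mul_one]
    noncomm_ring
  rw [h]
  rcases eq_or_ne i r with hi|hi <;> rcases eq_or_ne j r with hj|hj <;>
    simp [hi, hj, Matrix.add_apply, Matrix.single_mul_apply_same,
      Matrix.mul_single_apply_same,
      Matrix.single_mul_apply_of_ne,
      Matrix.mul_single_apply_of_ne] <;> ring

set_option maxHeartbeats 2000000 in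
theorem stmt9 (V : Type*) [Fintype V] [DecidableEq V]
    (X Y X' Y' : Finset V) (s : V)
    (hcov : X ∪ Y ∪ X' ∪ Y' = Finset.univ)
    (hXX' : X ∩ X' = {s})
    (hXY : X ∩ Y = ∅) (hXY' : X ∩ Y' = ∅)
    (hYX' : Y ∩ X' = ∅) (hYY' : Y ∩ Y' = ∅) (hX'Y' : X' ∩ Y' = ∅)
    (r : V) (hr : r ∈ X) (hrs : r ≠ s) :
    Tsr s r (glueF X Y X' Y') = glueF (X.erase r) Y X' (insert r Y') := by
  have dXY : ∀ v, v ∈ X → v ∈ Y → False := fun v h1 h2 => by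
    have : v ∈ X ∩ Y := Finset.mem_inter.mpr ⟨h1, h2⟩
    simp [hXY] at this
  have dXY' : ∀ v, v ∈ X → v ∈ Y' → False := fun v h1 h2 => by
    have : v ∈ X ∩ Y' := Finset.mem_inter.mpr ⟨h1, h2⟩
    simp [hXY'] at this
  have dYX' : ∀ v, v ∈ Y → v ∈ X' → False := fun v h1 h2 => by
    have : v ∈ Y ∩ X' := Finset.mem_inter.mpr ⟨h1, h2⟩
    simp [hYX'] at this
  have dYY' : ∀ v, v ∈ Y → v ∈ Y' → False := fun v h1 h2 => by
    have : v ∈ Y ∩ Y' := Finset.mem_inter.mpr ⟨h1, h2⟩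
    simp [hYY'] at this
  have dX'Y' : ∀ v, v ∈ X' → v ∈ Y' → False := fun v h1 h2 => by
    have : v ∈ X' ∩ Y' := Finset.mem_inter.mpr ⟨h1, h2⟩
    simp [hX'Y'] at this
  have dXX' : ∀ v, v ∈ X → v ∈ X' → v = s := fun v h1 h2 => by
    have : v ∈ X ∩ X' := Finset.mem_inter.mpr ⟨h1, h2⟩
    rwa [hXX', Finset.mem_singleton] at this
  have hsmem : s ∈ X ∩ X' := by rw [hXX']; exact Finset.mem_singleton_self s
  have hs : s ∈ X := (Finset.mem_inter.mp hsmem).1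
  have hs' : s ∈ X' := (Finset.mem_inter.mp hsmem).2
  have hsY : s ∉ Y := fun h => dXY s hs h
  have hsY' : s ∉ Y' := fun h => dXY' s hs h
  have hrY : r ∉ Y := fun h => dXY r hr h
  have hrX' : r ∉ X' := fun h => hrs (dXX' r hr h)
  have hrY' : r ∉ Y' := fun h => dXY' r hr h
  have hsr : s ≠ r := Ne.symm hrs
  have cov : ∀ v : V, v ∈ X ∨ v ∈ Y ∨ v ∈ X' ∨ v ∈ Y' := by
    intro v
    have : v ∈ X ∪ Y ∪ X' ∪ Y' := by rw [hcov]; exact Finset.mem_univ v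
    simpa [Finset.mem_union, or_assoc] using this
  have reg : ∀ v : V, v = r ∨ v = s ∨
      (v ∈ X ∧ v ∉ Y ∧ v ∉ X' ∧ v ∉ Y' ∧ v ≠ r ∧ v ≠ s ∧ r ≠ v ∧ s ≠ v) ∨
      (v ∈ Y ∧ v ∉ X ∧ v ∉ X' ∧ v ∉ Y' ∧ v ≠ r ∧ v ≠ s ∧ r ≠ v ∧ s ≠ v) ∨
      (v ∈ X' ∧ v ∉ X ∧ v ∉ Y ∧ v ∉ Y' ∧ v ≠ r ∧ v ≠ s ∧ r ≠ v ∧ s ≠ v) ∨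
      (v ∈ Y' ∧ v ∉ X ∧ v ∉ Y ∧ v ∉ X' ∧ v ≠ r ∧ v ≠ s ∧ r ≠ v ∧ s ≠ v) := by
    intro v
    by_cases h1 : v = r
    · exact Or.inl h1
    by_cases h2 : v = s
    · exact Or.inr (Or.inl h2)
    have h1' : r ≠ v := Ne.symm h1
    have h2' : s ≠ v := Ne.symm h2
    rcases cov v with h | h | h | h
    · exact Or.inr (Or.inr (Or.inl ⟨h, fun hh => dXY v h hh,
        fun hh => h2 (dXX' v h hh), fun hh => dXY' v h hh, h1, h2, h1', h2'⟩))
    · exact Or.inr (Or.inr (Or.inr (Or.inl ⟨h, fun hh => dXY v hh h,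
        fun hh => dYX' v h hh, fun hh => dYY' v h hh, h1, h2, h1', h2'⟩)))
    · exact Or.inr (Or.inr (Or.inr (Or.inr (Or.inl ⟨h, fun hh => h2 (dXX' v hh h),
        fun hh => dYX' v hh h, fun hh => dX'Y' v h hh, h1, h2, h1', h2'⟩))))
    · exact Or.inr (Or.inr (Or.inr (Or.inr (Or.inr ⟨h, fun hh => dXY' v hh h,
        fun hh => dYY' v hh h, fun hh => dX'Y' v hh h, h1, h2, h1', h2'⟩))))
  funext i j
  rw [Tsr_apply]
  by_cases hij : i = j
  · subst hij
    by_cases hir : i = r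
    · subst hir
      simp [glueF, hr, hs, hsr, hrs, hrY, hrX', hrY', hsY]
    · simp [glueF, hir]
  · rcases reg i with rfl | rfl | ⟨hi1, hi2, hi3, hi4, hi5, hi6, hi7, hi8⟩ |
        ⟨hi1, hi2, hi3, hi4, hi5, hi6, hi7, hi8⟩ |
        ⟨hi1, hi2, hi3, hi4, hi5, hi6, hi7, hi8⟩ |
        ⟨hi1, hi2, hi3, hi4, hi5, hi6, hi7, hi8⟩ <;>
      rcases reg j with rfl | rfl | ⟨hj1, hj2, hj3, hj4, hj5, hj6, hj7, hj8⟩ |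
        ⟨hj1, hj2, hj3, hj4, hj5, hj6, hj7, hj8⟩ |
        ⟨hj1, hj2, hj3, hj4, hj5, hj6, hj7, hj8⟩ |
        ⟨hj1, hj2, hj3, hj4, hj5, hj6, hj7, hj8⟩ <;>
      simp_all [glueF, hr, hs, hs', hsr, hrs, hrY, hrX', hrY', hsY, hsY']
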